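/- Suppose for each prompt x the map θ ↦ p_θ(x) takes values in [0,1], is twice differentiable, with ‖∇p_θ(x)‖ ≤ G and ‖∇²p_θ(x)‖ ≤ G² + F for all θ. Then for every integer k ≥ 1, the pass@k objective J_k(θ) = E_x[1−(1−p_θ(x))^k] is L_k-smooth with L_k = k²G² + kF, i.e., ‖∇²J_k(θ)‖ ≤ k²G² + kF for all θ. -/

import Mathlib

open Finset

private lemma passk_aux1 {E : Type*} [NormedAddCommGroup E] [NormedSpace ℝ E]
    (P : E → ℝ) (hP : Differentiable ℝ P) (d : ℝ) (k : ℕ) (θ : E) :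
    HasFDerivAt (fun t => d * (1 - (1 - P t) ^ k))
      ((d * ((k : ℝ) * (1 - P θ) ^ (k - 1))) • fderiv ℝ P θ) θ := by
  have hp := (hP θ).hasFDerivAt
  have hg : HasDerivAt (fun t : ℝ => 1 - (1 - t) ^ k)
      ((k : ℝ) * (1 - P θ) ^ (k - 1)) (P θ) := by
    have h0 : HasDerivAt (fun t : ℝ => 1 - t) (-1) (P θ) := by
      simpa using (hasDerivAt_id (P θ)).const_sub 1
    have := (h0.fun_pow k).const_sub 1
    exact this.congr_deriv (by ring)
  have := hg.comp_hasFDerivAt θ hp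
  have heq : (fun t => d * (1 - (1 - P t) ^ k)) =
      (fun t => d * ((fun s : ℝ => 1 - (1 - s) ^ k) ∘ P) t) := rfl
  rw [heq]
  simpa [mul_smul] using this.const_mul d

private lemma passk_aux2 {E : Type*} [NormedAddCommGroup E] [NormedSpace ℝ E]
    (P : E → ℝ) (hC2 : ContDiff ℝ 2 P) (d : ℝ) (hd : 0 ≤ d)
    (G F : ℝ) (hG : 0 ≤ G) (hF : 0 ≤ F)
    (hgrad : ∀ θ, ‖fderiv ℝ P θ‖ ≤ G)
    (hhess : ∀ θ, ‖fderiv ℝ (fderiv ℝ P) θ‖ ≤ G ^ 2 + F)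
    (k : ℕ) (hk : 1 ≤ k) (θ : E) (hp01 : P θ ∈ Set.Icc (0:ℝ) 1) :
    ∃ Φ : E →L[ℝ] (E →L[ℝ] ℝ),
      HasFDerivAt (fun θ' => (d * ((k : ℝ) * (1 - P θ') ^ (k - 1))) • fderiv ℝ P θ') Φ θ ∧
      ‖Φ‖ ≤ d * ((k : ℝ) ^ 2 * G ^ 2 + (k : ℝ) * F) := by
  have hPd : Differentiable ℝ P := hC2.differentiable (by norm_num)
  have hP'd : Differentiable ℝ (fderiv ℝ P) :=
    (hC2.fderiv_right (m := 1) (by norm_num)).differentiable (by norm_num)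
  have hp := (hPd θ).hasFDerivAt
  -- derivative of the scalar coefficient
  have hg : HasDerivAt (fun t : ℝ => (1 - t) ^ (k - 1))
      (-(((k - 1 : ℕ) : ℝ) * (1 - P θ) ^ (k - 1 - 1))) (P θ) := by
    have h0 : HasDerivAt (fun t : ℝ => 1 - t) (-1) (P θ) := by
      simpa using (hasDerivAt_id (P θ)).const_sub 1
    have := h0.fun_pow (k - 1)
    exact this.congr_deriv (by ring)
  have hc : HasFDerivAt (fun θ' => d * ((k : ℝ) * (1 - P θ') ^ (k - 1)))
      ((d * (k : ℝ) * -(((k - 1 : ℕ) : ℝ) * (1 - P θ) ^ (k - 1 - 1))) • fderiv ℝ P θ) θ := by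
    have h2 := (hg.comp_hasFDerivAt θ hp).const_mul (d * (k : ℝ))
    have heq : (fun θ' : E => d * ((k : ℝ) * (1 - P θ') ^ (k - 1))) =
        (fun θ' : E => (d * (k : ℝ)) * ((fun t : ℝ => (1 - t) ^ (k - 1)) ∘ P) θ') := by
      funext θ'; simp [Function.comp]; ring
    rw [heq]
    exact h2.congr_fderiv (by rw [smul_smul])
  have hΦ := hc.smul (hP'd θ).hasFDerivAt
  refine ⟨_, hΦ, ?_⟩
  -- norm bound
  obtain ⟨hp0, hp1⟩ := hp01
  have hu0 : (0 : ℝ) ≤ 1 - P θ := by linarith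
  have hu1 : 1 - P θ ≤ 1 := by linarith
  have hpow : ∀ n : ℕ, (1 - P θ) ^ n ≤ 1 := fun n => pow_le_one₀ hu0 hu1
  have hpow0 : ∀ n : ℕ, (0 : ℝ) ≤ (1 - P θ) ^ n := fun n => pow_nonneg hu0 n
  have hk1 : (1:ℝ) ≤ (k:ℝ) := by exact_mod_cast hk
  have hcast : ((k - 1 : ℕ) : ℝ) = (k : ℝ) - 1 := by rw [Nat.cast_sub hk]; simp
  have hkk : (0:ℝ) ≤ (k : ℝ) * ((k : ℝ) - 1) := by nlinarith
  set a : ℝ := d * ((k : ℝ) * (1 - P θ) ^ (k - 1)) with ha_def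
  set b : ℝ := d * (k : ℝ) * -(((k - 1 : ℕ) : ℝ) * (1 - P θ) ^ (k - 1 - 1)) with hb_def
  have hck : |a| ≤ d * k := by
    rw [ha_def, abs_mul, abs_mul, abs_of_nonneg hd,
      abs_of_nonneg (by positivity : (0:ℝ) ≤ (k:ℝ)), abs_of_nonneg (hpow0 _)]
    have h := hpow (k - 1)
    nlinarith [mul_nonneg hd (by positivity : (0:ℝ) ≤ (k:ℝ)), hpow0 (k-1)]
  have hb : |b| ≤ d * ((k : ℝ) * ((k : ℝ) - 1)) := by
    have heq : b = -(d * ((k : ℝ) * (((k - 1 : ℕ) : ℝ) * (1 - P θ) ^ (k - 1 - 1)))) := by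
      rw [hb_def]; ring
    rw [heq, abs_neg, abs_of_nonneg]
    · have h := hpow (k - 1 - 1)
      have hkc : (0:ℝ) ≤ ((k - 1 : ℕ) : ℝ) := Nat.cast_nonneg _
      rw [hcast] at hkc ⊢
      nlinarith [mul_nonneg hd hkk, mul_nonneg (mul_nonneg hd hkk) (hpow0 (k-1-1))]
    · exact mul_nonneg hd (mul_nonneg (by positivity)
        (mul_nonneg (Nat.cast_nonneg _) (hpow0 _)))
  have hc'k : ‖b • fderiv ℝ P θ‖ ≤ d * ((k : ℝ) * ((k : ℝ) - 1)) * G := by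
    rw [norm_smul b (fderiv ℝ P θ), Real.norm_eq_abs]
    calc |b| * ‖fderiv ℝ P θ‖ ≤ (d * ((k : ℝ) * ((k : ℝ) - 1))) * G :=
          mul_le_mul hb (hgrad θ) (norm_nonneg _) (mul_nonneg hd hkk)
      _ = d * ((k : ℝ) * ((k : ℝ) - 1)) * G := by ring
  have hA : ‖a • fderiv ℝ (fderiv ℝ P) θ‖ ≤ (d * k) * (G ^ 2 + F) := by
    refine (ContinuousLinearMap.opNorm_smul_le a (fderiv ℝ (fderiv ℝ P) θ)).trans ?_
    rw [Real.norm_eq_abs]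
    exact mul_le_mul hck (hhess θ) (norm_nonneg _) (mul_nonneg hd (by positivity))
  have hB : ‖(b • fderiv ℝ P θ).smulRight (fderiv ℝ P θ)‖ ≤
      (d * ((k : ℝ) * ((k : ℝ) - 1)) * G) * G := by
    rw [ContinuousLinearMap.norm_smulRight_apply]
    exact mul_le_mul hc'k (hgrad θ) (norm_nonneg _)
      (mul_nonneg (mul_nonneg hd hkk) hG)
  calc ‖a • fderiv ℝ (fderiv ℝ P) θ + (b • fderiv ℝ P θ).smulRight (fderiv ℝ P θ)‖
      ≤ ‖a • fderiv ℝ (fderiv ℝ P) θ‖ + ‖(b • fderiv ℝ P θ).smulRight (fderiv ℝ P θ)‖ :=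
        ContinuousLinearMap.opNorm_add_le _ _
    _ ≤ (d * k) * (G ^ 2 + F) + (d * ((k : ℝ) * ((k : ℝ) - 1)) * G) * G :=
        add_le_add hA hB
    _ ≤ d * ((k : ℝ) ^ 2 * G ^ 2 + (k : ℝ) * F) := by nlinarith [sq_nonneg G]

set_option maxHeartbeats 1000000 in
/-- Smoothness of pass@k: if each `θ ↦ p_θ(x)` takes values in `[0,1]`, is `C²`, with
`‖∇p_θ(x)‖ ≤ G` and `‖∇²p_θ(x)‖ ≤ G² + F`, then the pass@k objective
`J_k(θ) = E_x[1−(1−p_θ(x))^k]` (finite prompt distribution) satisfies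
`‖∇²J_k(θ)‖ ≤ k²G² + kF` for all `θ`, i.e. `J_k` is `L_k`-smooth with `L_k = k²G² + kF`. -/
theorem passk_smoothness
    {E : Type*} [NormedAddCommGroup E] [NormedSpace ℝ E]
    {X : Type*} [Fintype X] (D : X → ℝ) (hD : ∀ x, 0 ≤ D x) (hD1 : ∑ x, D x = 1)
    (p : X → E → ℝ)
    (hp01 : ∀ x θ, p x θ ∈ Set.Icc (0:ℝ) 1)
    (hC2 : ∀ x, ContDiff ℝ 2 (p x))
    (G F : ℝ) (hG : 0 ≤ G) (hF : 0 ≤ F)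
    (hgrad : ∀ x θ, ‖fderiv ℝ (p x) θ‖ ≤ G)
    (hhess : ∀ x θ, ‖fderiv ℝ (fderiv ℝ (p x)) θ‖ ≤ G ^ 2 + F)
    (k : ℕ) (hk : 1 ≤ k) :
    ∀ θ : E,
      ‖fderiv ℝ (fderiv ℝ (fun θ' => ∑ x, D x * (1 - (1 - p x θ') ^ k))) θ‖ ≤
        (k : ℝ) ^ 2 * G ^ 2 + (k : ℝ) * F := by
  intro θ
  have hPd : ∀ x, Differentiable ℝ (p x) := fun x => (hC2 x).differentiable (by norm_num)
  have hfder1 : fderiv ℝ (fun θ' => ∑ x, D x * (1 - (1 - p x θ') ^ k)) =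
      fun θ' => ∑ x, (D x * ((k : ℝ) * (1 - p x θ') ^ (k - 1))) • fderiv ℝ (p x) θ' := by
    funext θ'
    exact (HasFDerivAt.fun_sum (fun x _ => passk_aux1 (p x) (hPd x) (D x) k θ')).fderiv
  rw [hfder1]
  choose Φ hΦ hΦn using fun x =>
    passk_aux2 (p x) (hC2 x) (D x) (hD x) G F hG hF (hgrad x) (hhess x) k hk θ (hp01 x θ)
  have hsum : HasFDerivAt
      (fun θ' => ∑ x, (D x * ((k : ℝ) * (1 - p x θ') ^ (k - 1))) • fderiv ℝ (p x) θ')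
      (∑ x, Φ x) θ := HasFDerivAt.fun_sum (fun x _ => hΦ x)
  rw [hsum.fderiv]
  have step1 : ‖∑ x, Φ x‖ ≤ ∑ x, ‖Φ x‖ := norm_sum_le Finset.univ Φ
  have step2 : ∑ x, ‖Φ x‖ ≤ ∑ x, D x * ((k : ℝ) ^ 2 * G ^ 2 + (k : ℝ) * F) :=
    Finset.sum_le_sum (fun x _ => hΦn x)
  have step3 : ∑ x, D x * ((k : ℝ) ^ 2 * G ^ 2 + (k : ℝ) * F) =
      (k : ℝ) ^ 2 * G ^ 2 + (k : ℝ) * F := by rw [← Finset.sum_mul, hD1, one_mul]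
  linarith
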